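/- Let U ⊆ ℝ^{2n} be open with canonical coordinates (q₁,…,qₙ,p₁,…,pₙ), and let H = H₁, H₂,…,Hₙ : U → ℝ be smooth functions in separable involution (for each fixed k: ∂H_i/∂q_k·∂H_j/∂p_k − ∂H_i/∂p_k·∂H_j/∂q_k = 0), with ∂H/∂p_i nowhere zero on U for every i. Define l_i^{(α)} := (∂H_{α+1}/∂p_i)/(∂H/∂p_i) and the diagonal operator fields K_α := Σ_{i=1}^n l_i^{(α)}·( ∂/∂q_i ⊗ dq_i + ∂/∂p_i ⊗ dp_i ), α = 0,…,n−1. Then: (1) the chain relations hold, i.e. also ∂H_{α+1}/∂q_i = l_i^{(α)}·∂H/∂q_i for all i, so K_αᵀdH = dH_{α+1}; (2) each K_α satisfies K_αᵀJ = JK_α for the standard symplectic matrix J; (3) the K_α pairwise commute and, being diagonal fields of operators, have identically vanishing Haantjes tensor; and (4) if the functions are vertically independent, det(∂H_i/∂p_j) ≠ 0 on U, then K₀,…,K_{n−1} are pointwise linearly independent. (Paper: Theorem 7.13, converse part — every separable system belongs to a Lenard–Haantjes chain of the ωH structure (7.13).) -/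
import Mathlib


open Matrix

/-- Phase space `ℝ^{2n}` with coordinates indexed by `Fin n ⊕ Fin n`:
`Sum.inl i` is the `i`-th position-type coordinate and `Sum.inr i` the `i`-th
momentum-type coordinate. -/
abbrev Phase (n : ℕ) := (Fin n ⊕ Fin n) → ℝ

/-- Gradient (vector of partial derivatives) of a function on phase space. -/
noncomputable def grad {n : ℕ} (F : Phase n → ℝ) (x : Phase n) : Phase n :=
  fun s => fderiv ℝ F x (Pi.single s 1)

/-- Canonical Poisson bracket
`{F,G} = Σᵢ (∂F/∂qᵢ·∂G/∂pᵢ − ∂F/∂pᵢ·∂G/∂qᵢ)`. -/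
noncomputable def poisson {n : ℕ} (F G : Phase n → ℝ) (x : Phase n) : ℝ :=
  ∑ i : Fin n,
    (grad F x (Sum.inl i) * grad G x (Sum.inr i)
      - grad F x (Sum.inr i) * grad G x (Sum.inl i))

/-- The standard symplectic matrix `J = [[0, Iₙ], [−Iₙ, 0]]`. -/
def symplJ (n : ℕ) : Matrix (Fin n ⊕ Fin n) (Fin n ⊕ Fin n) ℝ :=
  Matrix.fromBlocks 0 1 (-1) 0

/-- Lie bracket of vector fields on phase space. -/
noncomputable def lieBracketP {n : ℕ} (X Y : Phase n → Phase n) : Phase n → Phase n :=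
  fun x => fderiv ℝ Y x (X x) - fderiv ℝ X x (Y x)

/-- The vector field `LX : x ↦ L(x)·X(x)` associated with a matrix-valued field `L`. -/
noncomputable def matVec {n : ℕ}
    (L : Phase n → Matrix (Fin n ⊕ Fin n) (Fin n ⊕ Fin n) ℝ)
    (X : Phase n → Phase n) : Phase n → Phase n :=
  fun x => (L x) *ᵥ (X x)

/-- Nijenhuis torsion of a matrix-valued field of operators on phase space:
`T_L(X,Y) = L²[X,Y] + [LX,LY] − L([X,LY] + [LX,Y])`. -/
noncomputable def nijenhuisTorsionP {n : ℕ}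
    (L : Phase n → Matrix (Fin n ⊕ Fin n) (Fin n ⊕ Fin n) ℝ)
    (X Y : Phase n → Phase n) : Phase n → Phase n :=
  fun x =>
    L x *ᵥ (L x *ᵥ lieBracketP X Y x) + lieBracketP (matVec L X) (matVec L Y) x
      - L x *ᵥ (lieBracketP X (matVec L Y) x + lieBracketP (matVec L X) Y x)

/-- Haantjes tensor of a matrix-valued field of operators on phase space:
`H_L(X,Y) = L²T_L(X,Y) + T_L(LX,LY) − L(T_L(X,LY) + T_L(LX,Y))`. -/
noncomputable def haantjesTensorP {n : ℕ}
    (L : Phase n → Matrix (Fin n ⊕ Fin n) (Fin n ⊕ Fin n) ℝ)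
    (X Y : Phase n → Phase n) : Phase n → Phase n :=
  fun x =>
    L x *ᵥ (L x *ᵥ nijenhuisTorsionP L X Y x)
      + nijenhuisTorsionP L (matVec L X) (matVec L Y) x
      - L x *ᵥ (nijenhuisTorsionP L X (matVec L Y) x
          + nijenhuisTorsionP L (matVec L X) Y x)

/-- The diagonal Haantjes operators (7.13) of a separable system:
`K_α = Σᵢ (∂H_{α+1}/∂pᵢ)/(∂H/∂pᵢ) · (∂/∂qᵢ ⊗ dqᵢ + ∂/∂pᵢ ⊗ dpᵢ)`, where `Sum.inl i`
is `qᵢ` and `Sum.inr i` is `pᵢ`. -/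
noncomputable def separableK {n : ℕ} [NeZero n] (H : Fin n → Phase n → ℝ)
    (α : Fin n) (x : Phase n) : Matrix (Fin n ⊕ Fin n) (Fin n ⊕ Fin n) ℝ :=
  Matrix.diagonal (fun s =>
    grad (H α) x (Sum.inr (Sum.elim id id s)) / grad (H 0) x (Sum.inr (Sum.elim id id s)))


section Aux

variable {n : ℕ}

/-- Component of the Fréchet derivative of a `Pi`-valued map. -/
lemma fderiv_comp_apply (F : Phase n → Phase n) (x v : Phase n)
    (hF : ∀ c, DifferentiableAt ℝ (fun y => F y c) x) (c : Fin n ⊕ Fin n) :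
    fderiv ℝ F x v c = fderiv ℝ (fun y => F y c) x v := by
  rw [fderiv_pi hF]; rfl

lemma matVec_diag (d : Phase n → Phase n) (U : Phase n → Phase n) :
    matVec (fun y => Matrix.diagonal (d y)) U = fun y a => d y a * U y a := by
  funext y a; simp [matVec, Matrix.mulVec_diagonal]

lemma lie_comp (A B : Phase n → Phase n) (x : Phase n)
    (hA : ∀ c, DifferentiableAt ℝ (fun y => A y c) x)
    (hB : ∀ c, DifferentiableAt ℝ (fun y => B y c) x) (c : Fin n ⊕ Fin n) :
    lieBracketP A B x c
      = fderiv ℝ (fun y => B y c) x (A x) - fderiv ℝ (fun y => A y c) x (B x) := by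
  have h1 : fderiv ℝ B x (A x) c = fderiv ℝ (fun y => B y c) x (A x) :=
    fderiv_comp_apply B x (A x) hB c
  have h2 : fderiv ℝ A x (B x) c = fderiv ℝ (fun y => A y c) x (B x) :=
    fderiv_comp_apply A x (B x) hA c
  simp [lieBracketP, h1, h2]

/-- The Nijenhuis torsion of a diagonal field of operators, in closed form. -/
lemma nij_diag (d U V : Phase n → Phase n) (x : Phase n)
    (hd : ∀ c, DifferentiableAt ℝ (fun y => d y c) x)
    (hU : ∀ c, DifferentiableAt ℝ (fun y => U y c) x)
    (hV : ∀ c, DifferentiableAt ℝ (fun y => V y c) x) (c : Fin n ⊕ Fin n) :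
    nijenhuisTorsionP (fun y => Matrix.diagonal (d y)) U V x c =
      V x c * (fderiv ℝ (fun y => d y c) x (fun a => d x a * U x a)
          - d x c * fderiv ℝ (fun y => d y c) x (U x))
      - U x c * (fderiv ℝ (fun y => d y c) x (fun a => d x a * V x a)
          - d x c * fderiv ℝ (fun y => d y c) x (V x)) := by
  have hLU : ∀ c, DifferentiableAt ℝ (fun y => d y c * U y c) x := fun c => (hd c).mul (hU c)
  have hLV : ∀ c, DifferentiableAt ℝ (fun y => d y c * V y c) x := fun c => (hd c).mul (hV c)
  have e1 : lieBracketP U V x c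
      = fderiv ℝ (fun y => V y c) x (U x) - fderiv ℝ (fun y => U y c) x (V x) :=
    lie_comp U V x hU hV c
  have e2 : lieBracketP (fun y a => d y a * U y a) (fun y a => d y a * V y a) x c
      = fderiv ℝ (fun y => d y c * V y c) x (fun a => d x a * U x a)
        - fderiv ℝ (fun y => d y c * U y c) x (fun a => d x a * V x a) :=
    lie_comp _ _ x hLU hLV c
  have e3 : lieBracketP U (fun y a => d y a * V y a) x c
      = fderiv ℝ (fun y => d y c * V y c) x (U x)
        - fderiv ℝ (fun y => U y c) x (fun a => d x a * V x a) :=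
    lie_comp _ _ x hU hLV c
  have e4 : lieBracketP (fun y a => d y a * U y a) V x c
      = fderiv ℝ (fun y => V y c) x (fun a => d x a * U x a)
        - fderiv ℝ (fun y => d y c * U y c) x (V x) :=
    lie_comp _ _ x hLU hV c
  have mU : fderiv ℝ (fun y => d y c * U y c) x
      = d x c • fderiv ℝ (fun y => U y c) x + U x c • fderiv ℝ (fun y => d y c) x :=
    fderiv_mul (hd c) (hU c)
  have mV : fderiv ℝ (fun y => d y c * V y c) x
      = d x c • fderiv ℝ (fun y => V y c) x + V x c • fderiv ℝ (fun y => d y c) x :=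
    fderiv_mul (hd c) (hV c)
  simp only [nijenhuisTorsionP, matVec_diag, Pi.add_apply, Pi.sub_apply,
    Matrix.mulVec_diagonal, e1, e2, e3, e4, mU, mV, ContinuousLinearMap.add_apply,
    ContinuousLinearMap.smul_apply, smul_eq_mul]
  ring

/-- The Haantjes tensor of a diagonal field of operators vanishes. -/
lemma haantjes_diag (d X Y : Phase n → Phase n) (x : Phase n)
    (hd : ∀ c, DifferentiableAt ℝ (fun y => d y c) x)
    (hX : ∀ c, DifferentiableAt ℝ (fun y => X y c) x)
    (hY : ∀ c, DifferentiableAt ℝ (fun y => Y y c) x) :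
    haantjesTensorP (fun y => Matrix.diagonal (d y)) X Y x = 0 := by
  have hLX : ∀ c, DifferentiableAt ℝ (fun y => d y c * X y c) x := fun c => (hd c).mul (hX c)
  have hLY : ∀ c, DifferentiableAt ℝ (fun y => d y c * Y y c) x := fun c => (hd c).mul (hY c)
  funext c
  have t1 := nij_diag d X Y x hd hX hY c
  have t2 := nij_diag d (fun y a => d y a * X y a) (fun y a => d y a * Y y a) x hd hLX hLY c
  have t3 := nij_diag d X (fun y a => d y a * Y y a) x hd hX hLY c
  have t4 := nij_diag d (fun y a => d y a * X y a) Y x hd hLX hY c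
  simp only [haantjesTensorP, matVec_diag, Pi.add_apply, Pi.sub_apply,
    Matrix.mulVec_diagonal, t1, t2, t3, t4, Pi.zero_apply]
  ring

/-- Each partial derivative of a smooth function is smooth on an open set. -/
lemma grad_contDiffOn {F : Phase n → ℝ} {U : Set (Phase n)} (hU : IsOpen U)
    (hF : ContDiffOn ℝ (⊤ : ℕ∞) F U) (s : Fin n ⊕ Fin n) :
    ContDiffOn ℝ (⊤ : ℕ∞) (fun y => grad F y s) U :=
  (hF.fderiv_of_isOpen hU (by simp)).clm_apply contDiffOn_const

end Aux

/-- Paper, Theorem 7.13, converse part: if `H = H₁,…,Hₙ` are in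
separable involution in the canonical coordinates `(q,p)` and `∂H/∂pᵢ` is nowhere zero,
then with `l_i^{(α)} = (∂H_{α+1}/∂pᵢ)/(∂H/∂pᵢ)` and the diagonal operators `K_α` above:
(1) the chain relations `K_αᵀdH = dH_{α+1}` hold; (2) each `K_α` is compatible with the
canonical symplectic structure; (3) the `K_α` pairwise commute and have identically
vanishing Haantjes tensor; (4) if `det(∂H_i/∂p_j) ≠ 0` on `U`, the `K_α` are pointwise
linearly independent. -/
theorem separable_haantjes_structure {n : ℕ} [NeZero n]
    (U : Set (Phase n)) (hU : IsOpen U)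
    (H : Fin n → Phase n → ℝ)
    (hH : ∀ j, ContDiffOn ℝ (⊤ : ℕ∞) (H j) U)
    (hsep : ∀ i j k, ∀ x ∈ U,
      grad (H i) x (Sum.inl k) * grad (H j) x (Sum.inr k)
        - grad (H i) x (Sum.inr k) * grad (H j) x (Sum.inl k) = 0)
    (hpne : ∀ x ∈ U, ∀ i, grad (H 0) x (Sum.inr i) ≠ 0) :
    ((∀ α i, ∀ x ∈ U,
        grad (H α) x (Sum.inl i)
          = (grad (H α) x (Sum.inr i) / grad (H 0) x (Sum.inr i))
              * grad (H 0) x (Sum.inl i)) ∧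
      ∀ α, ∀ x ∈ U, (separableK H α x)ᵀ *ᵥ grad (H 0) x = grad (H α) x) ∧
    (∀ α, ∀ x ∈ U, (separableK H α x)ᵀ * symplJ n = symplJ n * separableK H α x) ∧
    ((∀ α β, ∀ x ∈ U, separableK H α x * separableK H β x
        = separableK H β x * separableK H α x) ∧
      ∀ α (X Y : Phase n → Phase n),
        ContDiffOn ℝ (⊤ : ℕ∞) X U → ContDiffOn ℝ (⊤ : ℕ∞) Y U →
        ∀ x ∈ U, haantjesTensorP (separableK H α) X Y x = 0) ∧
    ((∀ x ∈ U, (Matrix.of fun i j : Fin n => grad (H i) x (Sum.inr j)).det ≠ 0) →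
      ∀ x ∈ U, LinearIndependent ℝ (fun α => separableK H α x)) := by
  classical
  -- differentiability of the diagonal entries of the operators Kα
  have hdiff : ∀ (α : Fin n), ∀ x ∈ U, ∀ c : Fin n ⊕ Fin n,
      DifferentiableAt ℝ (fun y =>
        grad (H α) y (Sum.inr (Sum.elim id id c)) /
          grad (H 0) y (Sum.inr (Sum.elim id id c))) x := by
    intro α x hx c
    have h1 : DifferentiableAt ℝ (fun y => grad (H α) y (Sum.inr (Sum.elim id id c))) x :=
      (((grad_contDiffOn hU (hH α) _).differentiableOn (by simp)).differentiableAt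
        (hU.mem_nhds hx))
    have h2 : DifferentiableAt ℝ (fun y => grad (H 0) y (Sum.inr (Sum.elim id id c))) x :=
      (((grad_contDiffOn hU (hH 0) _).differentiableOn (by simp)).differentiableAt
        (hU.mem_nhds hx))
    simp only [div_eq_mul_inv]
    exact h1.mul (h2.inv (hpne x hx _))
  -- chain relations
  have chain : ∀ α i, ∀ x ∈ U,
      grad (H α) x (Sum.inl i)
        = (grad (H α) x (Sum.inr i) / grad (H 0) x (Sum.inr i))
            * grad (H 0) x (Sum.inl i) := by
    intro α i x hx
    have h := hsep α 0 i x hx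
    have hD := hpne x hx i
    field_simp
    linarith [h]
  refine ⟨⟨chain, ?_⟩, ?_, ⟨?_, ?_⟩, ?_⟩
  · -- Kαᵀ dH = dHα
    intro α x hx
    funext s
    rw [separableK, Matrix.diagonal_transpose]
    rw [show ((Matrix.diagonal fun s =>
        grad (H α) x (Sum.inr (Sum.elim id id s)) /
          grad (H 0) x (Sum.inr (Sum.elim id id s))) *ᵥ grad (H 0) x) s
      = (grad (H α) x (Sum.inr (Sum.elim id id s)) /
          grad (H 0) x (Sum.inr (Sum.elim id id s))) * grad (H 0) x s from
      Matrix.mulVec_diagonal _ _ s]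
    cases s with
    | inl i =>
        exact (chain α i x hx).symm
    | inr i =>
        simp only [Sum.elim_inr, id_eq]
        exact div_mul_cancel₀ _ (hpne x hx i)
  · -- symplectic compatibility
    intro α x hx
    ext s t
    rw [separableK, Matrix.diagonal_transpose]
    rw [Matrix.diagonal_mul, Matrix.mul_diagonal]
    rcases s with i | i <;> rcases t with j | j <;>
        simp only [symplJ, Matrix.fromBlocks_apply₁₁, Matrix.fromBlocks_apply₁₂,
          Matrix.fromBlocks_apply₂₁, Matrix.fromBlocks_apply₂₂, Matrix.zero_apply,
          Matrix.one_apply, Matrix.neg_apply, mul_zero, zero_mul, Pi.zero_apply,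
          neg_zero, mul_ite, ite_mul, mul_one, one_mul, mul_neg, neg_mul] <;>
      (try split_ifs with h) <;> (try subst h) <;> rfl
  · -- commutation
    intro α β x hx
    rw [separableK, separableK, Matrix.diagonal_mul_diagonal, Matrix.diagonal_mul_diagonal]
    exact congrArg Matrix.diagonal (funext fun s => mul_comm _ _)
  · -- vanishing Haantjes tensor
    intro α X Y hX hY x hx
    have hKd : separableK H α = fun y => Matrix.diagonal (fun s =>
        grad (H α) y (Sum.inr (Sum.elim id id s)) /
          grad (H 0) y (Sum.inr (Sum.elim id id s))) := rfl
    rw [hKd]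
    refine haantjes_diag _ X Y x (fun c => hdiff α x hx c) ?_ ?_
    · exact fun c => differentiableAt_pi.mp
        ((hX.differentiableOn (by simp)).differentiableAt (hU.mem_nhds hx)) c
    · exact fun c => differentiableAt_pi.mp
        ((hY.differentiableOn (by simp)).differentiableAt (hU.mem_nhds hx)) c
  · -- linear independence
    intro hdet x hx
    rw [Fintype.linearIndependent_iff]
    intro g hg α
    have key : ∀ j : Fin n, ∑ i : Fin n, grad (H i) x (Sum.inr j) * g i = 0 := by
      intro j
      have h0 := congrFun (congrFun hg (Sum.inr j)) (Sum.inr j)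
      have h1 : ∑ i : Fin n, g i *
          (grad (H i) x (Sum.inr j) / grad (H 0) x (Sum.inr j)) = 0 := by
        have := h0
        simp only [Matrix.sum_apply, Matrix.smul_apply, separableK,
          Matrix.diagonal_apply_eq, smul_eq_mul, Matrix.zero_apply, Sum.elim_inr, id_eq]
          at this
        exact this
      have h2 : (∑ i : Fin n, g i * grad (H i) x (Sum.inr j))
          / grad (H 0) x (Sum.inr j) = 0 := by
        rw [Finset.sum_div] at *
        simpa only [mul_div_assoc] using h1
      have h3 := (div_eq_zero_iff.mp h2).resolve_right (hpne x hx j)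
      calc ∑ i : Fin n, grad (H i) x (Sum.inr j) * g i
          = ∑ i : Fin n, g i * grad (H i) x (Sum.inr j) := by
            exact Finset.sum_congr rfl fun i _ => mul_comm _ _
        _ = 0 := h3
    have hM : (Matrix.of fun i j : Fin n => grad (H i) x (Sum.inr j))ᵀ.det ≠ 0 := by
      rw [Matrix.det_transpose]; exact hdet x hx
    have hv : (Matrix.of fun i j : Fin n => grad (H i) x (Sum.inr j))ᵀ *ᵥ g = 0 := by
      funext j
      simpa [Matrix.mulVec, dotProduct, Matrix.transpose_apply] using key j
    have := Matrix.eq_zero_of_mulVec_eq_zero hM hv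
    exact congrFun this α
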